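/- (Semidiscrete stability) Suppose ‖f(·,t,u,w)‖ ≤ ‖g(·,t)‖ uniformly in u, w, and D(u) ≥ D₋ > 0. If u_N : [0,t₀] → V_N is differentiable and satisfies (u_N', v) + a(D(u_N); u_N, v) = (f(t,u_N,Ju_N), v) for all v ∈ V_N, and μ := D₋ · inf_{v∈V, v≠0} a(v,v)/‖v‖² > 0, then ‖u_N(t)‖ ≤ e^{-μ t}‖u_N(0)‖ + ∫₀ᵗ e^{-μ(t-s)} ‖g(·,s)‖ ds. -/

import Mathlib

open RealInnerProductSpace

/-- Semidiscrete stability: if ‖f(t,u_N,Ju_N)‖ ≤ ‖g(t)‖ (represented by the bound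
‖F t‖ ≤ g t), aD(w;u,u) ≥ D₋ a(u,u), and
μ := D₋ · inf_{v≠0} a(v,v)/‖v‖² > 0, then the Galerkin solution satisfies
‖u_N(t)‖ ≤ e^{-μt}‖u_N(0)‖ + ∫₀ᵗ e^{-μ(t-s)}‖g(s)‖ ds. -/
theorem stmt17 {E : Type*} [NormedAddCommGroup E] [InnerProductSpace ℝ E]
    (a : E → E → ℝ) (aD : E → E → E → ℝ) (Dm : ℝ) (hDm : 0 < Dm)
    (hDcoer : ∀ w u, Dm * a u u ≤ aD w u u)
    (μ t0 : ℝ) (ht0 : 0 < t0)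
    (hμdef : μ = Dm * sInf ((fun v : E => a v v / ‖v‖ ^ 2) '' {v : E | v ≠ 0}))
    (hμ : 0 < μ)
    (VN : Submodule ℝ E) (uN uN' : ℝ → E) (F : ℝ → E) (g : ℝ → ℝ)
    (hg : Continuous g) (hbound : ∀ t ∈ Set.Icc (0:ℝ) t0, ‖F t‖ ≤ g t)
    (hmem : ∀ t ∈ Set.Icc (0:ℝ) t0, uN t ∈ VN)
    (hderiv : ∀ t ∈ Set.Icc (0:ℝ) t0, HasDerivAt uN (uN' t) t)
    (heq : ∀ t ∈ Set.Icc (0:ℝ) t0, ∀ v ∈ VN,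
      ⟪uN' t, v⟫ + aD (uN t) (uN t) v = ⟪F t, v⟫) :
    ∀ t ∈ Set.Icc (0:ℝ) t0,
      ‖uN t‖ ≤ Real.exp (-μ * t) * ‖uN 0‖ +
        ∫ s in (0:ℝ)..t, Real.exp (-μ * (t - s)) * g s := by
  -- Coercivity: μ‖v‖² ≤ Dm · a v v for v ≠ 0
  have hquot : ∀ v : E, v ≠ 0 → μ * ‖v‖ ^ 2 ≤ Dm * a v v := by
    intro v hv
    set S := ((fun v : E => a v v / ‖v‖ ^ 2) '' {v : E | v ≠ 0}) with hSdef
    by_cases hb : BddBelow S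
    · have hmemS : a v v / ‖v‖ ^ 2 ∈ S := ⟨v, hv, rfl⟩
      have h1 : sInf S ≤ a v v / ‖v‖ ^ 2 := csInf_le hb hmemS
      have hn : (0:ℝ) < ‖v‖ ^ 2 := by
        have : ‖v‖ ≠ 0 := norm_ne_zero_iff.2 hv
        positivity
      have h2 : Dm * sInf S ≤ Dm * (a v v / ‖v‖ ^ 2) :=
        mul_le_mul_of_nonneg_left h1 hDm.le
      have h3 : Dm * (a v v / ‖v‖ ^ 2) * ‖v‖ ^ 2 = Dm * a v v := by
        field_simp
      calc μ * ‖v‖ ^ 2 = Dm * sInf S * ‖v‖ ^ 2 := by rw [hμdef]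
        _ ≤ Dm * (a v v / ‖v‖ ^ 2) * ‖v‖ ^ 2 := by
            exact mul_le_mul_of_nonneg_right h2 hn.le
        _ = Dm * a v v := h3
    · exfalso
      rw [hμdef, Real.sInf_of_not_bddBelow hb, mul_zero] at hμ
      exact lt_irrefl 0 hμ
  -- g is nonnegative on the interval
  have hgnn : ∀ s ∈ Set.Icc (0:ℝ) t0, 0 ≤ g s := fun s hs =>
    le_trans (norm_nonneg _) (hbound s hs)
  -- main differential inequality
  have hmain : ∀ s ∈ Set.Icc (0:ℝ) t0,
      ⟪uN' s, uN s⟫ ≤ g s * ‖uN s‖ - μ * ‖uN s‖ ^ 2 := by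
    intro s hs
    by_cases h0 : uN s = 0
    · simp [h0]
    · have h1 := heq s hs (uN s) (hmem s hs)
      have h2 := hquot (uN s) h0
      have h3 := hDcoer (uN s) (uN s)
      have h4 : ⟪F s, uN s⟫ ≤ ‖F s‖ * ‖uN s‖ := real_inner_le_norm _ _
      have h5 := hbound s hs
      have h6 : (0:ℝ) ≤ ‖uN s‖ := norm_nonneg _
      nlinarith
  intro t ht
  obtain ⟨ht0', htt0⟩ := ht
  have hIcc : Set.Icc (0:ℝ) t ⊆ Set.Icc 0 t0 := Set.Icc_subset_Icc le_rfl htt0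
  apply le_of_forall_pos_le_add
  intro η hη
  have hμt : (0:ℝ) ≤ μ * t := mul_nonneg hμ.le ht0'
  set K : ℝ := Real.exp (-μ * t) + μ * t + 1 with hKdef
  have hKpos : 0 < K := by
    have := Real.exp_pos (-μ * t); nlinarith
  set δ : ℝ := η / K with hδdef
  have hδ : 0 < δ := div_pos hη hKpos
  -- regularized norm
  set ψ : ℝ → ℝ := fun s => Real.sqrt (⟪uN s, uN s⟫ + δ ^ 2) with hψdef
  have hpos : ∀ s, 0 < ⟪uN s, uN s⟫ + δ ^ 2 := by
    intro s
    have := real_inner_self_nonneg (x := uN s)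
    nlinarith
  have hψpos : ∀ s, 0 < ψ s := fun s => Real.sqrt_pos.2 (hpos s)
  have hψsq : ∀ s, ψ s ^ 2 = ‖uN s‖ ^ 2 + δ ^ 2 := by
    intro s
    rw [hψdef]
    simp only
    rw [Real.sq_sqrt (hpos s).le, real_inner_self_eq_norm_sq]
  have hnle : ∀ s, ‖uN s‖ ≤ ψ s := by
    intro s
    have h1 : ‖uN s‖ ^ 2 ≤ ψ s ^ 2 := by rw [hψsq]; nlinarith
    nlinarith [hψpos s, norm_nonneg (uN s)]
  have hδle : ∀ s, δ ≤ ψ s := by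
    intro s
    have h1 : δ ^ 2 ≤ ψ s ^ 2 := by
      rw [hψsq]; nlinarith [norm_nonneg (uN s)]
    nlinarith [hψpos s]
  -- the comparison function
  set h : ℝ → ℝ := fun s => Real.exp (μ * s) * (g s + μ * δ) with hhdef
  have hh : Continuous h := by fun_prop
  set I : ℝ → ℝ := fun s => ∫ x in (0:ℝ)..s, h x with hIdef
  have hIderiv : ∀ s : ℝ, HasDerivAt I (h s) s := by
    intro s
    exact intervalIntegral.integral_hasDerivAt_right (hh.intervalIntegrable _ _)
      (hh.stronglyMeasurableAtFilter _ _) hh.continuousAt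
  set φ : ℝ → ℝ := fun s => Real.exp (μ * s) * ψ s - I s with hφdef
  have hexp : ∀ s : ℝ, HasDerivAt (fun s => Real.exp (μ * s)) (μ * Real.exp (μ * s)) s := by
    intro s
    have := (Real.hasDerivAt_exp (μ * s)).comp s ((hasDerivAt_id s).const_mul μ)
    exact this.congr_deriv (by ring)
  have hψderiv : ∀ s ∈ Set.Icc (0:ℝ) t0,
      HasDerivAt ψ (⟪uN' s, uN s⟫ / ψ s) s := by
    intro s hs
    have h1 : HasDerivAt (fun x => ⟪uN x, uN x⟫ + δ ^ 2)
        (⟪uN s, uN' s⟫ + ⟪uN' s, uN s⟫) s :=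
      (HasDerivAt.inner ℝ (hderiv s hs) (hderiv s hs)).add_const _
    have h2 := h1.sqrt (ne_of_gt (hpos s))
    have h3 : (⟪uN s, uN' s⟫ + ⟪uN' s, uN s⟫) / (2 * Real.sqrt (⟪uN s, uN s⟫ + δ ^ 2))
        = ⟪uN' s, uN s⟫ / ψ s := by
      rw [real_inner_comm (uN s) (uN' s), hψdef]
      have hp := (hψpos s)
      rw [hψdef] at hp
      field_simp
      ring
    rw [h3] at h2
    exact h2
  have hφderiv : ∀ s ∈ Set.Icc (0:ℝ) t0,
      HasDerivAt φ (μ * Real.exp (μ * s) * ψ s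
        + Real.exp (μ * s) * (⟪uN' s, uN s⟫ / ψ s) - h s) s := by
    intro s hs
    exact ((hexp s).mul (hψderiv s hs)).sub (hIderiv s)
  -- derivative nonpositive
  have hnonpos : ∀ s ∈ Set.Icc (0:ℝ) t0,
      μ * Real.exp (μ * s) * ψ s
        + Real.exp (μ * s) * (⟪uN' s, uN s⟫ / ψ s) - h s ≤ 0 := by
    intro s hs
    have hp := hψpos s
    set q : ℝ := ⟪uN' s, uN s⟫ / ψ s with hqdef
    have hq : q * ψ s = ⟪uN' s, uN s⟫ := div_mul_cancel₀ _ hp.ne'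
    have hm := hmain s hs
    have hgs := hgnn s hs
    have hA : μ * ψ s + q - (g s + μ * δ) ≤ 0 := by
      nlinarith [hψsq s, hnle s, hδle s, norm_nonneg (uN s),
        mul_nonneg hgs (sub_nonneg.2 (hnle s)),
        mul_nonneg (mul_nonneg hμ.le hδ.le) (sub_nonneg.2 (hδle s)), hq, hm, hp]
    have he : (0:ℝ) < Real.exp (μ * s) := Real.exp_pos _
    have hid : μ * Real.exp (μ * s) * ψ s + Real.exp (μ * s) * q - h s
        = Real.exp (μ * s) * (μ * ψ s + q - (g s + μ * δ)) := by
      rw [hhdef]; ring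
    rw [hid]
    exact mul_nonpos_of_nonneg_of_nonpos he.le hA
  -- antitonicity of φ on [0, t]
  have hanti : AntitoneOn φ (Set.Icc 0 t) := by
    apply antitoneOn_of_deriv_nonpos (convex_Icc 0 t)
    · intro s hs
      exact ((hφderiv s (hIcc hs)).continuousAt).continuousWithinAt
    · intro s hs
      rw [interior_Icc] at hs
      have hs' : s ∈ Set.Icc (0:ℝ) t0 := hIcc (Set.Ioo_subset_Icc_self hs)
      exact ((hφderiv s hs').differentiableAt).differentiableWithinAt
    · intro s hs
      rw [interior_Icc] at hs
      have hs' : s ∈ Set.Icc (0:ℝ) t0 := hIcc (Set.Ioo_subset_Icc_self hs)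
      rw [(hφderiv s hs').deriv]
      exact hnonpos s hs'
  have hφt : φ t ≤ φ 0 := hanti (Set.left_mem_Icc.2 ht0') (Set.right_mem_Icc.2 ht0') ht0'
  have hI0 : I 0 = 0 := intervalIntegral.integral_same
  have hφ0 : φ 0 = ψ 0 := by
    rw [hφdef]; simp [hI0]
  have hkey : Real.exp (μ * t) * ψ t ≤ ψ 0 + I t := by
    have := hφt
    rw [hφ0, hφdef] at this
    simp only at this
    linarith
  -- bound ψ 0
  have hψ0 : ψ 0 ≤ ‖uN 0‖ + δ := by
    have h1 : ⟪uN 0, uN 0⟫ + δ ^ 2 ≤ (‖uN 0‖ + δ) ^ 2 := by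
      rw [real_inner_self_eq_norm_sq]
      nlinarith [norm_nonneg (uN 0)]
    calc ψ 0 ≤ Real.sqrt ((‖uN 0‖ + δ) ^ 2) := Real.sqrt_le_sqrt h1
      _ = ‖uN 0‖ + δ := Real.sqrt_sq (by positivity)
  -- split and bound the integral I t
  have hint1 : IntervalIntegrable (fun x => Real.exp (μ * x) * g x)
      MeasureTheory.volume 0 t := by
    apply Continuous.intervalIntegrable; fun_prop
  have hint2 : IntervalIntegrable (fun x => Real.exp (μ * x) * (μ * δ))
      MeasureTheory.volume 0 t := by
    apply Continuous.intervalIntegrable; fun_prop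
  have hIsplit : I t = (∫ x in (0:ℝ)..t, Real.exp (μ * x) * g x)
      + ∫ x in (0:ℝ)..t, Real.exp (μ * x) * (μ * δ) := by
    rw [hIdef]
    simp only
    rw [← intervalIntegral.integral_add hint1 hint2]
    apply intervalIntegral.integral_congr
    intro x _
    rw [hhdef]; ring
  have hibound : (∫ x in (0:ℝ)..t, Real.exp (μ * x) * (μ * δ))
      ≤ t * (Real.exp (μ * t) * (μ * δ)) := by
    have h1 : (∫ x in (0:ℝ)..t, Real.exp (μ * x) * (μ * δ))
        ≤ ∫ _x in (0:ℝ)..t, Real.exp (μ * t) * (μ * δ) := by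
      apply intervalIntegral.integral_mono_on ht0' hint2
        (intervalIntegrable_const)
      intro x hx
      have : Real.exp (μ * x) ≤ Real.exp (μ * t) :=
        Real.exp_le_exp.2 (mul_le_mul_of_nonneg_left hx.2 hμ.le)
      nlinarith [mul_pos hμ hδ]
    have h2 : (∫ _x in (0:ℝ)..t, Real.exp (μ * t) * (μ * δ))
        = (t - 0) • (Real.exp (μ * t) * (μ * δ)) := intervalIntegral.integral_const _
    rw [h2, smul_eq_mul, sub_zero] at h1
    linarith
  -- the exponential-weighted integral identity
  have hintid : Real.exp (-μ * t) * (∫ x in (0:ℝ)..t, Real.exp (μ * x) * g x)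
      = ∫ x in (0:ℝ)..t, Real.exp (-μ * (t - x)) * g x := by
    rw [← intervalIntegral.integral_const_mul]
    apply intervalIntegral.integral_congr
    intro x _
    show Real.exp (-μ * t) * (Real.exp (μ * x) * g x) = Real.exp (-μ * (t - x)) * g x
    rw [← mul_assoc, ← Real.exp_add]
    congr 1
    ring
  -- final assembly
  have hnt : ‖uN t‖ ≤ ψ t := hnle t
  have hexppos : (0:ℝ) < Real.exp (μ * t) := Real.exp_pos _
  have hexpneg : (0:ℝ) < Real.exp (-μ * t) := Real.exp_pos _
  have hexpmul : Real.exp (-μ * t) * Real.exp (μ * t) = 1 := by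
    rw [← Real.exp_add]; ring_nf; exact Real.exp_zero
  have hψt : ψ t ≤ Real.exp (-μ * t) * (ψ 0 + I t) := by
    have h1 : Real.exp (-μ * t) * (Real.exp (μ * t) * ψ t)
        ≤ Real.exp (-μ * t) * (ψ 0 + I t) :=
      mul_le_mul_of_nonneg_left hkey hexpneg.le
    rw [← mul_assoc, hexpmul, one_mul] at h1
    exact h1
  have hfinal : ‖uN t‖ ≤ Real.exp (-μ * t) * ‖uN 0‖
      + (∫ x in (0:ℝ)..t, Real.exp (-μ * (t - x)) * g x) + δ * K := by
    have h2 : ψ 0 + I t ≤ ‖uN 0‖ + δ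
        + ((∫ x in (0:ℝ)..t, Real.exp (μ * x) * g x)
          + t * (Real.exp (μ * t) * (μ * δ))) := by
      rw [hIsplit]; linarith
    have h3 : ‖uN t‖ ≤ Real.exp (-μ * t) * (‖uN 0‖ + δ
        + ((∫ x in (0:ℝ)..t, Real.exp (μ * x) * g x)
          + t * (Real.exp (μ * t) * (μ * δ)))) :=
      le_trans hnt (le_trans hψt (mul_le_mul_of_nonneg_left h2 hexpneg.le))
    have h4 : Real.exp (-μ * t) * (‖uN 0‖ + δ
        + ((∫ x in (0:ℝ)..t, Real.exp (μ * x) * g x)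
          + t * (Real.exp (μ * t) * (μ * δ))))
        = Real.exp (-μ * t) * ‖uN 0‖
          + Real.exp (-μ * t) * (∫ x in (0:ℝ)..t, Real.exp (μ * x) * g x)
          + δ * (Real.exp (-μ * t) + μ * t * (Real.exp (-μ * t) * Real.exp (μ * t))) := by
      ring
    rw [h4, hexpmul, hintid] at h3
    have h5 : δ * (Real.exp (-μ * t) + μ * t * 1) ≤ δ * K := by
      apply mul_le_mul_of_nonneg_left _ hδ.le
      rw [hKdef]; linarith
    linarith
  have hδK : δ * K = η := div_mul_cancel₀ η hKpos.ne'
  linarith
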